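/- Let (λ_j)_{j≥1} be a nondecreasing sequence of positive reals, α ∈ (0,1), and N ≥ 1 with λ_{N+1} − λ_N ≥ 1. Set γ = (λ_{N+1}^{1+α} + λ_N^{1+α})/2. Then for every v ∈ ℓ² with Σ_j λ_j^{1+α} v_j² < ∞, writing p = P_N v and q = Q_N v, one has: γ·(‖q‖² − ‖p‖²) − (‖A^{(1+α)/2} q‖² − ‖A^{(1+α)/2} p‖²) ≤ −((1+α)/2)·λ_N^α·‖v‖². -/

import Mathlib

noncomputable section

/-- `Plow N v` keeps the entries with index `j ≤ N` (the projector `P_N`). -/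
def Plow (N : ℕ+) (v : ℕ+ → ℝ) : ℕ+ → ℝ := fun j => if j ≤ N then v j else 0

/-- `Qhigh N v` keeps the entries with index `j > N` (the projector `Q_N`). -/
def Qhigh (N : ℕ+) (v : ℕ+ → ℝ) : ℕ+ → ℝ := fun j => if j ≤ N then 0 else v j

/-- `PkOp lam k N v` keeps exactly the entries with `λ_j < λ_N − k`. -/
def PkOp (lam : ℕ+ → ℝ) (k : ℝ) (N : ℕ+) (v : ℕ+ → ℝ) : ℕ+ → ℝ :=
  fun j => if lam j < lam N - k then v j else 0

/-- `RkOp lam k N v` keeps exactly the entries with `λ_N − k ≤ λ_j ≤ λ_N + k`. -/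
def RkOp (lam : ℕ+ → ℝ) (k : ℝ) (N : ℕ+) (v : ℕ+ → ℝ) : ℕ+ → ℝ :=
  fun j => if lam N - k ≤ lam j ∧ lam j ≤ lam N + k then v j else 0

/-- `QkOp lam k N v` keeps exactly the entries with `λ_j > λ_N + k`. -/
def QkOp (lam : ℕ+ → ℝ) (k : ℝ) (N : ℕ+) (v : ℕ+ → ℝ) : ℕ+ → ℝ :=
  fun j => if lam N + k < lam j then v j else 0

/-- Squared `ℓ²` norm. -/
def nsq (v : ℕ+ → ℝ) : ℝ := ∑' j, (v j) ^ 2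

/-- Squared norm `‖A^s v‖² = Σ_j λ_j^{2s} v_j²` of the diagonal operator power. -/
def asq (lam : ℕ+ → ℝ) (s : ℝ) (v : ℕ+ → ℝ) : ℝ := ∑' j, lam j ^ (2 * s) * (v j) ^ 2

/-- Lemma 6.2 of the paper: estimate of the term `I_{V,p,q}`. -/
theorem IVpq_estimate
    (lam : ℕ+ → ℝ) (hmono : Monotone lam) (hpos : ∀ j, 0 < lam j)
    (α : ℝ) (hα0 : 0 < α) (hα1 : α < 1)
    (N : ℕ+) (hgap : 1 ≤ lam (N + 1) - lam N)
    (γ : ℝ) (hγ : γ = (lam (N + 1) ^ (1 + α) + lam N ^ (1 + α)) / 2)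
    (v : ℕ+ → ℝ)
    (hv2 : Summable fun j => (v j) ^ 2)
    (hv : Summable fun j => lam j ^ (1 + α) * (v j) ^ 2) :
    γ * (nsq (Qhigh N v) - nsq (Plow N v)) -
        (asq lam ((1 + α) / 2) (Qhigh N v) - asq lam ((1 + α) / 2) (Plow N v)) ≤
      -((1 + α) / 2) * lam N ^ α * nsq v := by
  set c : ℝ := (1 + α) / 2 * lam N ^ α with hc
  have haN : 0 < lam N := hpos N
  have haN1 : 0 < lam (N + 1) := hpos (N + 1)
  -- Bernoulli-based key inequality
  have hkey : (1 + α) * lam N ^ α ≤ lam (N + 1) ^ (1 + α) - lam N ^ (1 + α) := by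
    set s : ℝ := (lam (N + 1) - lam N) / lam N with hs
    have hs0 : 0 ≤ s := div_nonneg (by linarith) haN.le
    have hB : 1 + (1 + α) * s ≤ (1 + s) ^ (1 + α) :=
      one_add_mul_self_le_rpow_one_add (by linarith) (by linarith)
    have h1s : (1 : ℝ) + s = lam (N + 1) / lam N := by
      field_simp [hs]
      rw [hs, add_mul, div_mul_cancel₀ _ haN.ne']; ring
    have hmul : lam N ^ (1 + α) * (1 + (1 + α) * s) ≤ lam N ^ (1 + α) * (1 + s) ^ (1 + α) := by
      exact mul_le_mul_of_nonneg_left hB (Real.rpow_nonneg haN.le _)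
    have hrw : lam N ^ (1 + α) * (1 + s) ^ (1 + α) = lam (N + 1) ^ (1 + α) := by
      rw [h1s, ← Real.mul_rpow haN.le (div_nonneg haN1.le haN.le)]
      rw [mul_div_cancel₀ _ haN.ne']
    have hNa : lam N ^ (1 + α) = lam N * lam N ^ α := by
      rw [Real.rpow_add haN, Real.rpow_one]
    have hsa : lam N ^ (1 + α) * s = (lam (N + 1) - lam N) * lam N ^ α := by
      rw [hNa, hs]; field_simp
    have hge : lam N ^ α ≤ lam N ^ (1 + α) * s := by
      rw [hsa]
      nlinarith [Real.rpow_pos_of_pos haN α]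
    nlinarith
  have hγge : lam N ^ (1 + α) + c ≤ γ := by
    rw [hγ, hc]; nlinarith
  have hγle : γ ≤ lam (N + 1) ^ (1 + α) - c := by
    rw [hγ, hc]; nlinarith
  -- summability
  have habs : ∀ (w : ℕ+ → ℝ), (∀ j, |w j| ≤ |v j|) →
      Summable (fun j => (w j) ^ 2) ∧ Summable (fun j => lam j ^ (1 + α) * (w j) ^ 2) := by
    intro w hw
    have hsq : ∀ j, (w j) ^ 2 ≤ (v j) ^ 2 := fun j => by
      rw [← sq_abs (w j), ← sq_abs (v j)]
      exact pow_le_pow_left₀ (abs_nonneg _) (hw j) 2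
    constructor
    · exact hv2.of_nonneg_of_le (fun j => sq_nonneg _) hsq
    · exact hv.of_nonneg_of_le
        (fun j => mul_nonneg (Real.rpow_nonneg (hpos j).le _) (sq_nonneg _))
        (fun j => mul_le_mul_of_nonneg_left (hsq j) (Real.rpow_nonneg (hpos j).le _))
  have hQ : ∀ j, |Qhigh N v j| ≤ |v j| := by
    intro j; unfold Qhigh; split <;> simp
  have hP : ∀ j, |Plow N v j| ≤ |v j| := by
    intro j; unfold Plow; split <;> simp
  obtain ⟨hq2, hqa⟩ := habs _ hQ
  obtain ⟨hp2, hpa⟩ := habs _ hP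
  have h2s : 2 * ((1 + α) / 2) = 1 + α := by ring
  -- rewrite LHS as a single tsum
  have hLHS : γ * (nsq (Qhigh N v) - nsq (Plow N v)) -
      (asq lam ((1 + α) / 2) (Qhigh N v) - asq lam ((1 + α) / 2) (Plow N v)) =
      ∑' j, (γ * ((Qhigh N v j) ^ 2 - (Plow N v j) ^ 2) -
        (lam j ^ (1 + α) * (Qhigh N v j) ^ 2 - lam j ^ (1 + α) * (Plow N v j) ^ 2)) := by
    unfold nsq asq
    rw [h2s]
    rw [← Summable.tsum_sub hq2 hp2, ← tsum_mul_left, ← Summable.tsum_sub hqa hpa,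
      ← Summable.tsum_sub (((hq2.sub hp2).mul_left γ)) (hqa.sub hpa)]
  rw [hLHS]
  have hRHS : -((1 + α) / 2) * lam N ^ α * nsq v = ∑' j, (-c * (v j) ^ 2) := by
    unfold nsq
    rw [← tsum_mul_left]
    congr 1; funext j; rw [hc]; ring
  rw [hRHS]
  apply Summable.tsum_le_tsum _ _ (hv2.mul_left _)
  · intro j
    rcases le_or_gt j N with hj | hj
    · have hQj : Qhigh N v j = 0 := by unfold Qhigh; simp [hj]
      have hPj : Plow N v j = v j := by unfold Plow; simp [hj]
      rw [hQj, hPj]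
      have hle : lam j ^ (1 + α) ≤ lam N ^ (1 + α) :=
        Real.rpow_le_rpow (hpos j).le (hmono hj) (by linarith)
      nlinarith [sq_nonneg (v j)]
    · have hQj : Qhigh N v j = v j := by unfold Qhigh; simp [not_le.mpr hj]
      have hPj : Plow N v j = 0 := by unfold Plow; simp [not_le.mpr hj]
      rw [hQj, hPj]
      have hle : lam (N + 1) ^ (1 + α) ≤ lam j ^ (1 + α) :=
        Real.rpow_le_rpow haN1.le (hmono hj) (by linarith)
      nlinarith [sq_nonneg (v j)]
  · exact (((hq2.sub hp2).mul_left γ).sub ((hqa.sub hpa)))
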